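/- Let L be a positive self-adjoint operator on a Hilbert space H with spectral measure E, and write E_t = E([0,t)). Then for every f ∈ H and t > 0: e⁻¹ ‖E_t f‖ ≤ ‖e^{−L/t} f‖ ≤ (e − 1) Σ_{j=1}^∞ e^{−j} ‖E_{jt} f‖. -/

import Mathlib

open MeasureTheory

lemma ind_nonneg {s : Set ℝ} (l : ℝ) : 0 ≤ Set.indicator s (fun _ => (1:ℝ)) l :=
  Set.indicator_nonneg (fun _ _ => zero_le_one) l

lemma ind_le_one {s : Set ℝ} (l : ℝ) : Set.indicator s (fun _ => (1:ℝ)) l ≤ 1 := by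
  classical
  rw [Set.indicator_apply]; split <;> norm_num

lemma summable_aux (t : ℝ) (l : ℝ) :
    Summable (fun k : ℕ => Real.exp (-(k:ℝ)) *
      Set.indicator (Set.Ico 0 (((k:ℝ)+1)*t)) (fun _ => (1:ℝ)) l) := by
  apply Summable.of_nonneg_of_le
    (fun k => mul_nonneg (Real.exp_pos _).le (ind_nonneg l))
    (fun k => ?_)
    (summable_geometric_of_lt_one (le_of_lt (Real.exp_pos _)) (Real.exp_lt_one_iff.mpr (by norm_num)) (r := Real.exp (-1)))
  calc Real.exp (-(k:ℝ)) * Set.indicator (Set.Ico 0 (((k:ℝ)+1)*t)) (fun _ => (1:ℝ)) l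
      ≤ Real.exp (-(k:ℝ)) * 1 := mul_le_mul_of_nonneg_left (ind_le_one l) (Real.exp_pos _).le
    _ = Real.exp (-1) ^ k := by rw [mul_one, ← Real.exp_nat_mul]; ring_nf

lemma ptwise (t : ℝ) (ht : 0 < t) (l : ℝ) (hl : 0 ≤ l) :
    Real.exp (-(l/t)) ≤ (1 - Real.exp (-1)) *
      ∑' k : ℕ, Real.exp (-(k:ℝ)) *
        Set.indicator (Set.Ico 0 (((k:ℝ)+1)*t)) (fun _ => (1:ℝ)) l := by
  set j := Nat.floor (l/t) with hj
  have hjl : (j:ℝ) ≤ l/t := Nat.floor_le (div_nonneg hl ht.le)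
  have hlt : l/t < (j:ℝ) + 1 := Nat.lt_floor_add_one _
  have he1 : (0:ℝ) < 1 - Real.exp (-1) := by
    have := Real.exp_lt_one_iff.mpr (show (-1:ℝ) < 0 by norm_num)
    linarith
  have hexp : ∀ m : ℕ, Real.exp (-(j:ℝ)) * Real.exp (-1:ℝ) ^ m = Real.exp (-((j:ℝ)+(m:ℝ))) := by
    intro m
    rw [← Real.exp_nat_mul, ← Real.exp_add]
    congr 1; ring
  have key : Real.exp (-(j:ℝ)) * (1 - Real.exp (-1))⁻¹ ≤
      ∑' k : ℕ, Real.exp (-(k:ℝ)) *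
        Set.indicator (Set.Ico 0 (((k:ℝ)+1)*t)) (fun _ => (1:ℝ)) l := by
    have geo : ∑' m : ℕ, Real.exp (-((j:ℝ)+(m:ℝ))) =
        Real.exp (-(j:ℝ)) * (1 - Real.exp (-1))⁻¹ := by
      rw [tsum_congr (fun m => (hexp m).symm), tsum_mul_left,
        tsum_geometric_of_lt_one (Real.exp_pos _).le (Real.exp_lt_one_iff.mpr (by norm_num))]
    rw [← geo]
    apply Summable.tsum_le_tsum_of_inj (fun m => j + m) (add_right_injective j)
      (fun c _ => mul_nonneg (Real.exp_pos _).le (ind_nonneg l))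
      (fun m => ?_)
      (((summable_geometric_of_lt_one (Real.exp_pos (-1:ℝ)).le
        (Real.exp_lt_one_iff.mpr (by norm_num))).mul_left (Real.exp (-(j:ℝ)))).congr hexp)
      (summable_aux t l)
    have hmem : l ∈ Set.Ico (0:ℝ) ((((j+m:ℕ):ℝ)+1)*t) := by
      constructor
      · exact hl
      · calc l < ((j:ℝ)+1) * t := by rw [← div_lt_iff₀ ht]; exact hlt
          _ ≤ (((j+m:ℕ):ℝ)+1) * t := by
              apply mul_le_mul_of_nonneg_right _ ht.le
              push_cast; linarith [Nat.cast_nonneg (α := ℝ) m]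
    rw [Set.indicator_of_mem hmem, mul_one]
    apply le_of_eq
    congr 1; push_cast; ring
  calc Real.exp (-(l/t)) ≤ Real.exp (-(j:ℝ)) := Real.exp_le_exp.mpr (by linarith)
    _ = (1 - Real.exp (-1)) * (Real.exp (-(j:ℝ)) * (1 - Real.exp (-1))⁻¹) := by
        field_simp
    _ ≤ _ := mul_le_mul_of_nonneg_left key he1.le

/-- `L` a positive self-adjoint operator on a Hilbert space `H` with spectral
measure `E`, `E_t = E([0,t))`. Via the spectral theorem we encode the data of `L` and `f ∈ H`
by the finite Borel measure `ν = ‖E(·) f‖²` on `[0,∞)`, so that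
`‖E_t f‖ = √(ν [0,t))` and `‖e^{−L/t} f‖ = √(∫ e^{−2λ/t} dν(λ))`. Then for `t > 0`:
`e⁻¹ ‖E_t f‖ ≤ ‖e^{−L/t} f‖ ≤ (e − 1) Σ_{j=1}^∞ e^{−j} ‖E_{jt} f‖`. -/
theorem statement3
    {H : Type*} [NormedAddCommGroup H] [InnerProductSpace ℂ H] (f : H)
    (ν : Measure ℝ) [IsFiniteMeasure ν]
    (hsupp : ν (Set.Iio 0) = 0)
    (htotal : ν Set.univ = ENNReal.ofReal (‖f‖ ^ 2))
    (t : ℝ) (ht : 0 < t) :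
    Real.exp (-1) * Real.sqrt (ν (Set.Ico 0 t)).toReal ≤
      Real.sqrt (∫ l, Real.exp (-(2 * l / t)) ∂ν) ∧
    Real.sqrt (∫ l, Real.exp (-(2 * l / t)) ∂ν) ≤
      (Real.exp 1 - 1) * ∑' j : ℕ,
        Real.exp (-((j : ℝ) + 1)) * Real.sqrt (ν (Set.Ico 0 (((j : ℝ) + 1) * t))).toReal := by
  have he1 : (0:ℝ) < 1 - Real.exp (-1) := by
    have := Real.exp_lt_one_iff.mpr (show (-1:ℝ) < 0 by norm_num)
    linarith
  have haeg : ∀ᵐ l ∂ν, 0 ≤ l := by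
    rw [ae_iff]
    convert hsupp using 2
    ext l; simp [not_le, Set.Iio]
  have hcont : Continuous fun l : ℝ => Real.exp (-(2 * l / t)) :=
    Real.continuous_exp.comp (((continuous_const.mul continuous_id).div_const t).neg)
  have hInt : Integrable (fun l => Real.exp (-(2 * l / t))) ν := by
    refine Integrable.mono' (integrable_const 1) hcont.aestronglyMeasurable ?_
    filter_upwards [haeg] with l hl
    rw [Real.norm_eq_abs, abs_of_pos (Real.exp_pos _)]
    apply Real.exp_le_one_iff.mpr
    simp only [neg_nonpos]
    positivity
  set J := ∫⁻ l, ENNReal.ofReal (Real.exp (-(2 * l / t))) ∂ν with hJ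
  have hIeq : ∫ l, Real.exp (-(2 * l / t)) ∂ν = J.toReal := by
    rw [hJ, ← integral_eq_lintegral_of_nonneg_ae
      (Filter.Eventually.of_forall (fun l => (Real.exp_pos _).le)) hcont.aestronglyMeasurable]
  have hJtop : J ≠ ⊤ := by
    have : J ≤ ν Set.univ := by
      rw [← MeasureTheory.lintegral_one (μ := ν), hJ]
      apply lintegral_mono_ae
      filter_upwards [haeg] with l hl
      apply ENNReal.ofReal_le_of_le_toReal
      simp only [ENNReal.toReal_one]
      apply Real.exp_le_one_iff.mpr
      simp only [neg_nonpos]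
      positivity
    exact ne_top_of_le_ne_top (measure_ne_top ν _) this
  constructor
  · -- lower bound
    rw [hIeq]
    have h1 : Real.exp (-2) * (ν (Set.Ico 0 t)).toReal ≤ J.toReal := by
      rw [← hIeq]
      calc Real.exp (-2) * (ν (Set.Ico 0 t)).toReal
          ≤ ∫ l in Set.Ico 0 t, Real.exp (-(2 * l / t)) ∂ν := by
            apply setIntegral_ge_of_const_le_real measurableSet_Ico (measure_ne_top ν _)
              (fun x hx => ?_) hInt.integrableOn
            apply Real.exp_le_exp.mpr
            rw [neg_le_neg_iff]
            rw [div_le_iff₀ ht]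
            nlinarith [hx.1, hx.2]
        _ ≤ ∫ l, Real.exp (-(2 * l / t)) ∂ν :=
            setIntegral_le_integral hInt
              (Filter.Eventually.of_forall (fun l => (Real.exp_pos _).le))
    calc Real.exp (-1) * Real.sqrt (ν (Set.Ico 0 t)).toReal
        = Real.sqrt (Real.exp (-2) * (ν (Set.Ico 0 t)).toReal) := by
          rw [Real.sqrt_mul (Real.exp_pos _).le]
          congr 1
          rw [show Real.exp (-2) = Real.exp (-1) ^ 2 by rw [sq, ← Real.exp_add]; norm_num,
            Real.sqrt_sq (Real.exp_pos _).le]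
      _ ≤ Real.sqrt J.toReal := Real.sqrt_le_sqrt h1
  · -- upper bound
    set C : ENNReal := ENNReal.ofReal (1 - Real.exp (-1)) with hC
    set c : ℕ → ENNReal := fun k => ENNReal.ofReal (Real.exp (-(k:ℝ))) with hc
    set φ : ℝ → ENNReal := fun l => ENNReal.ofReal (Real.exp (-(l/t))) with hφ
    set χ : ℕ → ℝ → ENNReal := fun k l =>
      ENNReal.ofReal (Set.indicator (Set.Ico 0 (((k:ℝ)+1)*t)) (fun _ => (1:ℝ)) l) with hχ
    have hφm : Measurable φ :=
      (Real.continuous_exp.comp ((continuous_id.div_const t).neg)).measurable.ennreal_ofReal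
    have hχm : ∀ k, Measurable (χ k) := fun k =>
      (Measurable.indicator measurable_const measurableSet_Ico).ennreal_ofReal
    have hφsq : ∀ l, φ l ^ (2:ℝ) = ENNReal.ofReal (Real.exp (-(2*l/t))) := by
      intro l
      rw [hφ, ENNReal.ofReal_rpow_of_nonneg (Real.exp_pos _).le (by norm_num)]
      congr 1
      rw [show (2:ℝ) = ((2:ℕ):ℝ) from by norm_num, Real.rpow_natCast, sq, ← Real.exp_add]
      congr 1; ring
    have hχsq : ∀ k l, χ k l ^ (2:ℝ) = χ k l := by
      intro k l
      by_cases h : l ∈ Set.Ico (0:ℝ) (((k:ℝ)+1)*t)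
      · simp [hχ, Set.indicator_of_mem h, ENNReal.one_rpow]
      · simp [hχ, Set.indicator_of_notMem h,
          ENNReal.zero_rpow_of_pos (show (0:ℝ) < 2 by norm_num)]
    have hχint : ∀ k, ∫⁻ l, χ k l ∂ν = ν (Set.Ico 0 (((k:ℝ)+1)*t)) := by
      intro k
      have heq : ∀ l, χ k l =
          Set.indicator (Set.Ico 0 (((k:ℝ)+1)*t)) (fun _ => (1:ENNReal)) l := by
        intro l
        by_cases h : l ∈ Set.Ico (0:ℝ) (((k:ℝ)+1)*t) <;> simp [hχ, h]
      rw [lintegral_congr heq, lintegral_indicator measurableSet_Ico, setLIntegral_one]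
    have hH : ∀ k, ∫⁻ l, φ l * χ k l ∂ν ≤
        J ^ (1/2:ℝ) * (ν (Set.Ico 0 (((k:ℝ)+1)*t))) ^ (1/2:ℝ) := by
      intro k
      have h2 : (2:ℝ).HolderConjugate 2 := Real.HolderConjugate.two_two
      have := ENNReal.lintegral_mul_le_Lp_mul_Lq ν h2 hφm.aemeasurable (hχm k).aemeasurable
      simp only [Pi.mul_apply] at this
      calc ∫⁻ l, φ l * χ k l ∂ν
          ≤ (∫⁻ l, φ l ^ (2:ℝ) ∂ν) ^ (1/2:ℝ) * (∫⁻ l, χ k l ^ (2:ℝ) ∂ν) ^ (1/2:ℝ) := this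
        _ = J ^ (1/2:ℝ) * (ν (Set.Ico 0 (((k:ℝ)+1)*t))) ^ (1/2:ℝ) := by
            congr 2
            · rw [hJ]; exact lintegral_congr hφsq
            · rw [← hχint k]; exact lintegral_congr (hχsq k)
    have hae : ∀ᵐ l ∂ν, ENNReal.ofReal (Real.exp (-(2*l/t))) ≤
        ∑' k : ℕ, C * (c k * (φ l * χ k l)) := by
      filter_upwards [haeg] with l hl
      have hreal : Real.exp (-(2*l/t)) ≤ Real.exp (-(l/t)) * ((1 - Real.exp (-1)) *
          ∑' k : ℕ, Real.exp (-(k:ℝ)) *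
            Set.indicator (Set.Ico 0 (((k:ℝ)+1)*t)) (fun _ => (1:ℝ)) l) := by
        have h0 : Real.exp (-(2*l/t)) = Real.exp (-(l/t)) * Real.exp (-(l/t)) := by
          rw [← Real.exp_add]; congr 1; ring
        rw [h0]
        exact mul_le_mul_of_nonneg_left (ptwise t ht l hl) (Real.exp_pos _).le
      have hsum_nonneg : (0:ℝ) ≤ ∑' k : ℕ, Real.exp (-(k:ℝ)) *
          Set.indicator (Set.Ico 0 (((k:ℝ)+1)*t)) (fun _ => (1:ℝ)) l :=
        tsum_nonneg (fun k => mul_nonneg (Real.exp_pos _).le (ind_nonneg l))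
      calc ENNReal.ofReal (Real.exp (-(2*l/t)))
          ≤ ENNReal.ofReal (Real.exp (-(l/t)) * ((1 - Real.exp (-1)) *
              ∑' k : ℕ, Real.exp (-(k:ℝ)) *
                Set.indicator (Set.Ico 0 (((k:ℝ)+1)*t)) (fun _ => (1:ℝ)) l)) :=
            ENNReal.ofReal_le_ofReal hreal
        _ = φ l * (C * ∑' k : ℕ, c k * χ k l) := by
            rw [ENNReal.ofReal_mul (Real.exp_pos _).le, ENNReal.ofReal_mul he1.le,
              ENNReal.ofReal_tsum_of_nonneg
                (fun k => mul_nonneg (Real.exp_pos _).le (ind_nonneg l)) (summable_aux t l)]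
            congr 2
            exact tsum_congr fun k => ENNReal.ofReal_mul (Real.exp_pos _).le
        _ = ∑' k : ℕ, C * (c k * (φ l * χ k l)) := by
            rw [← ENNReal.tsum_mul_left, ← ENNReal.tsum_mul_left]
            apply tsum_congr
            intro k
            ring
    have hmain : J ≤ J ^ (1/2:ℝ) *
        (C * ∑' k : ℕ, c k * (ν (Set.Ico 0 (((k:ℝ)+1)*t))) ^ (1/2:ℝ)) := by
      calc J ≤ ∫⁻ l, ∑' k : ℕ, C * (c k * (φ l * χ k l)) ∂ν := lintegral_mono_ae hae
        _ = ∑' k : ℕ, ∫⁻ l, C * (c k * (φ l * χ k l)) ∂ν := by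
            apply lintegral_tsum
            intro k
            exact ((measurable_const.mul ((hφm.mul (hχm k)).const_mul _)).aemeasurable)
        _ = ∑' k : ℕ, C * (c k * ∫⁻ l, φ l * χ k l ∂ν) := by
            apply tsum_congr
            intro k
            rw [lintegral_const_mul (f := fun l => c k * (φ l * χ k l)) _
                ((hφm.mul (hχm k)).const_mul _),
              lintegral_const_mul (f := fun l => φ l * χ k l) _ (hφm.mul (hχm k))]
        _ ≤ ∑' k : ℕ, C * (c k * (J ^ (1/2:ℝ) *
              (ν (Set.Ico 0 (((k:ℝ)+1)*t))) ^ (1/2:ℝ))) := by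
            apply ENNReal.tsum_le_tsum
            intro k
            exact mul_le_mul_right (mul_le_mul_right (hH k) _) _
        _ = J ^ (1/2:ℝ) * (C * ∑' k : ℕ, c k *
              (ν (Set.Ico 0 (((k:ℝ)+1)*t))) ^ (1/2:ℝ)) := by
            rw [← ENNReal.tsum_mul_left, ← ENNReal.tsum_mul_left]
            apply tsum_congr
            intro k
            ring
    set R : ENNReal := C * ∑' k : ℕ, c k * (ν (Set.Ico 0 (((k:ℝ)+1)*t))) ^ (1/2:ℝ) with hR
    have hterm_ne_top : ∀ k : ℕ,
        c k * (ν (Set.Ico 0 (((k:ℝ)+1)*t))) ^ (1/2:ℝ) ≠ ⊤ := fun k =>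
      ENNReal.mul_ne_top ENNReal.ofReal_ne_top
        (ENNReal.rpow_ne_top_of_nonneg (by norm_num) (measure_ne_top ν _))
    have hRtop : R ≠ ⊤ := by
      have hck : ∀ k : ℕ, c k = ENNReal.ofReal (Real.exp (-1)) ^ k := by
        intro k
        rw [← ENNReal.ofReal_pow (Real.exp_pos _).le, ← Real.exp_nat_mul]
        simp only [hc]
        congr 2
        ring
      have hsum_le : (∑' k : ℕ, c k * (ν (Set.Ico 0 (((k:ℝ)+1)*t))) ^ (1/2:ℝ)) ≤
          (1 - ENNReal.ofReal (Real.exp (-1)))⁻¹ * (ν Set.univ) ^ (1/2:ℝ) := by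
        rw [← ENNReal.tsum_geometric, ← ENNReal.tsum_mul_right]
        apply ENNReal.tsum_le_tsum
        intro k
        rw [hck k]
        exact mul_le_mul_right
          (ENNReal.rpow_le_rpow (measure_mono (Set.subset_univ _)) (by norm_num)) _
      apply ENNReal.mul_ne_top ENNReal.ofReal_ne_top
      apply ne_top_of_le_ne_top _ hsum_le
      apply ENNReal.mul_ne_top _ (ENNReal.rpow_ne_top_of_nonneg (by norm_num) (measure_ne_top ν _))
      rw [Ne, ENNReal.inv_eq_top, tsub_eq_zero_iff_le]
      exact fun h => absurd (lt_of_lt_of_le (ENNReal.ofReal_lt_one.mpr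
        (Real.exp_lt_one_iff.mpr (by norm_num))) h) (lt_irrefl _)
    have hhalf : J ^ (1/2:ℝ) ≤ R := by
      by_cases hJ0 : J = 0
      · rw [hJ0, ENNReal.rpow_eq_zero_iff.mpr (Or.inl ⟨rfl, by norm_num⟩)]
        exact zero_le
      have hne0 : J ^ (1/2:ℝ) ≠ 0 := by
        simp [ENNReal.rpow_eq_zero_iff, hJ0, hJtop]
      have hnetop : J ^ (1/2:ℝ) ≠ ⊤ := ENNReal.rpow_ne_top_of_nonneg (by norm_num) hJtop
      have hsplit : J ^ (1/2:ℝ) * J ^ (1/2:ℝ) = J := by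
        rw [← ENNReal.rpow_add _ _ hJ0 hJtop]; norm_num
      have := hsplit.le.trans hmain
      exact (ENNReal.mul_le_mul_iff_right hne0 hnetop).mp this
    rw [hIeq]
    have hsqrtJ : Real.sqrt J.toReal = (J ^ (1/2:ℝ)).toReal := by
      rw [← ENNReal.toReal_rpow, Real.sqrt_eq_rpow]
    rw [hsqrtJ]
    have hRle : (J ^ (1/2:ℝ)).toReal ≤ R.toReal := ENNReal.toReal_mono hRtop hhalf
    apply hRle.trans
    have hRval : R.toReal = (1 - Real.exp (-1)) * ∑' k : ℕ,
        Real.exp (-(k:ℝ)) * Real.sqrt (ν (Set.Ico 0 (((k:ℝ)+1)*t))).toReal := by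
      rw [hR, ENNReal.toReal_mul, hC, ENNReal.toReal_ofReal he1.le,
        ENNReal.tsum_toReal_eq hterm_ne_top]
      congr 1
      apply tsum_congr
      intro k
      rw [ENNReal.toReal_mul, ← ENNReal.toReal_rpow, ← Real.sqrt_eq_rpow]
      congr 1
      simp only [hc]
      exact ENNReal.toReal_ofReal (Real.exp_pos _).le
    rw [hRval]
    have hterm : ∀ k : ℕ, Real.exp (-((k:ℝ)+1)) *
        Real.sqrt (ν (Set.Ico 0 (((k:ℝ)+1)*t))).toReal =
        Real.exp (-1) * (Real.exp (-(k:ℝ)) *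
          Real.sqrt (ν (Set.Ico 0 (((k:ℝ)+1)*t))).toReal) := by
      intro k
      rw [← mul_assoc, ← Real.exp_add]
      congr 2; ring
    rw [tsum_congr hterm, tsum_mul_left, ← mul_assoc]
    apply le_of_eq
    congr 1
    rw [Real.exp_neg]
    field_simp
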